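/- There exist graphs G1, G2 and an integer k ≥ 2 such that α_k(G1 □ G2) > α_k(G1 × G2); specifically, with k = 2, G1 = P_3 (path on 3 vertices), and G2 = K_{1,3} (star with 3 leaves), one has α_2(P_3 □ K_{1,3}) > α_2(P_3 × K_{1,3}). -/

import Mathlib

open SimpleGraph

/-- The `k`-independence number: the maximum size of a set of vertices at pairwise
distance greater than `k`. -/
noncomputable def kIndepNum {V : Type*} [Fintype V] (G : SimpleGraph V) (k : ℕ) : ℕ :=
  sSup {n | ∃ s : Finset V, s.card = n ∧ ∀ u ∈ s, ∀ v ∈ s, u ≠ v → (k : ℕ∞) < G.edist u v}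

/-- The tensor (direct / categorical) product of two simple graphs. -/
def tensorProd {V1 V2 : Type*} (G1 : SimpleGraph V1) (G2 : SimpleGraph V2) :
    SimpleGraph (V1 × V2) where
  Adj a b := G1.Adj a.1 b.1 ∧ G2.Adj a.2 b.2
  symm := by constructor; intro a b ⟨h1, h2⟩; exact ⟨G1.adj_symm h1, G2.adj_symm h2⟩
  loopless := by constructor; intro a ⟨h1, _⟩; exact G1.irrefl h1

instance : DecidableRel (pathGraph 3).Adj :=
  fun _ _ => decidable_of_iff _ pathGraph_adj.symm

instance : DecidableRel (completeBipartiteGraph (Fin 1) (Fin 3)).Adj :=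
  fun u v => decidable_of_iff ((u.isLeft ∧ v.isRight) ∨ (u.isRight ∧ v.isLeft)) Iff.rfl

instance : DecidableRel (pathGraph 3 □ completeBipartiteGraph (Fin 1) (Fin 3)).Adj :=
  fun _ _ => decidable_of_iff _ boxProd_adj.symm

instance : DecidableRel (tensorProd (pathGraph 3)
    (completeBipartiteGraph (Fin 1) (Fin 3))).Adj :=
  fun a b => decidable_of_iff ((pathGraph 3).Adj a.1 b.1 ∧
    (completeBipartiteGraph (Fin 1) (Fin 3)).Adj a.2 b.2) Iff.rfl

set_option synthInstance.maxHeartbeats 2000000 in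
set_option synthInstance.maxSize 2048 in
private theorem tensor_key : ∀ a b c : Fin 3 × (Fin 1 ⊕ Fin 3),
    ¬((a ≠ b ∧ ¬(tensorProd (pathGraph 3) (completeBipartiteGraph (Fin 1) (Fin 3))).Adj a b ∧
        ∀ w, ¬((tensorProd (pathGraph 3) (completeBipartiteGraph (Fin 1) (Fin 3))).Adj a w ∧
          (tensorProd (pathGraph 3) (completeBipartiteGraph (Fin 1) (Fin 3))).Adj w b)) ∧
      (a ≠ c ∧ ¬(tensorProd (pathGraph 3) (completeBipartiteGraph (Fin 1) (Fin 3))).Adj a c ∧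
        ∀ w, ¬((tensorProd (pathGraph 3) (completeBipartiteGraph (Fin 1) (Fin 3))).Adj a w ∧
          (tensorProd (pathGraph 3) (completeBipartiteGraph (Fin 1) (Fin 3))).Adj w c)) ∧
      (b ≠ c ∧ ¬(tensorProd (pathGraph 3) (completeBipartiteGraph (Fin 1) (Fin 3))).Adj b c ∧
        ∀ w, ¬((tensorProd (pathGraph 3) (completeBipartiteGraph (Fin 1) (Fin 3))).Adj b w ∧
          (tensorProd (pathGraph 3) (completeBipartiteGraph (Fin 1) (Fin 3))).Adj w c))) := by
  decide

/-- Distance greater than 2 is equivalent to a decidable-looking condition. -/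
lemma two_lt_edist_iff {V : Type*} (G : SimpleGraph V) (u v : V) :
    (2 : ℕ∞) < G.edist u v ↔
      u ≠ v ∧ ¬G.Adj u v ∧ ∀ w, ¬(G.Adj u w ∧ G.Adj w v) := by
  constructor
  · intro h
    refine ⟨?_, ?_, ?_⟩
    · rintro rfl
      simp [SimpleGraph.edist_self] at h
    · intro ha
      have h1 := SimpleGraph.edist_le ha.toWalk
      simp only [SimpleGraph.Adj.toWalk, SimpleGraph.Walk.length_cons,
        SimpleGraph.Walk.length_nil] at h1
      exact absurd (h1.trans (by norm_num)) h.not_ge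
    · rintro w ⟨h1, h2⟩
      have h3 := SimpleGraph.edist_le (h1.toWalk.append h2.toWalk)
      simp only [SimpleGraph.Adj.toWalk, SimpleGraph.Walk.length_append,
        SimpleGraph.Walk.length_cons, SimpleGraph.Walk.length_nil] at h3
      exact absurd (le_of_le_of_eq h3 (by norm_num)) h.not_ge
  · rintro ⟨hne, hadj, hw⟩
    by_contra hle
    push_neg at hle
    have hnt : G.edist u v ≠ ⊤ := fun ht => by
      rw [ht] at hle
      exact absurd hle (by simp)
    obtain ⟨p, hp⟩ := SimpleGraph.exists_walk_of_edist_ne_top hnt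
    have hlen : p.length ≤ 2 := by
      have : (p.length : ℕ∞) ≤ 2 := hp ▸ hle
      exact_mod_cast this
    match p, hlen with
    | .nil, _ => exact hne rfl
    | .cons h .nil, _ => exact hadj h
    | .cons h (.cons h' .nil), _ => exact hw _ ⟨h, h'⟩
    | .cons _ (.cons _ (.cons _ _)), hlen => simp at hlen

theorem kIndepNum_box_gt_tensor_example :
    kIndepNum (tensorProd (pathGraph 3) (completeBipartiteGraph (Fin 1) (Fin 3))) 2 <
      kIndepNum (pathGraph 3 □ completeBipartiteGraph (Fin 1) (Fin 3)) 2 := by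
  set GT := tensorProd (pathGraph 3) (completeBipartiteGraph (Fin 1) (Fin 3)) with hGT
  set GB := pathGraph 3 □ completeBipartiteGraph (Fin 1) (Fin 3) with hGB
  have hupper : kIndepNum GT 2 ≤ 2 := by
    unfold kIndepNum
    have h0 : 0 ∈ {n | ∃ s : Finset (Fin 3 × (Fin 1 ⊕ Fin 3)), s.card = n ∧
        ∀ u ∈ s, ∀ v ∈ s, u ≠ v → ((2:ℕ) : ℕ∞) < GT.edist u v} := ⟨∅, by simp, by simp⟩
    apply csSup_le ⟨0, h0⟩
    rintro n ⟨s, rfl, hs⟩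
    by_contra hc
    push_neg at hc
    obtain ⟨a, b, c, ha, hb, hc', hab, hac, hbc⟩ := Finset.two_lt_card_iff.mp hc
    have fab := (two_lt_edist_iff GT a b).mp (hs a ha b hb hab)
    have fac := (two_lt_edist_iff GT a c).mp (hs a ha c hc' hac)
    have fbc := (two_lt_edist_iff GT b c).mp (hs b hb c hc' hbc)
    exact tensor_key a b c ⟨fab, fac, fbc⟩
  have hlower : 3 ≤ kIndepNum GB 2 := by
    have hbdd : BddAbove {n | ∃ s : Finset (Fin 3 × (Fin 1 ⊕ Fin 3)), s.card = n ∧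
        ∀ u ∈ s, ∀ v ∈ s, u ≠ v → (2 : ℕ∞) < GB.edist u v} := by
      refine ⟨12, ?_⟩
      rintro n ⟨s, rfl, -⟩
      calc s.card ≤ Fintype.card (Fin 3 × (Fin 1 ⊕ Fin 3)) := s.card_le_univ
        _ = 12 := by decide
    apply le_csSup hbdd
    refine ⟨{(0, Sum.inr 0), (1, Sum.inr 1), (2, Sum.inr 2)}, by decide, ?_⟩
    intro u hu v hv huv
    rw [_root_.two_lt_edist_iff]
    revert huv
    fin_cases hu <;> fin_cases hv <;> decide
  omega
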